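/- Fix an integer k ≥ 2. With Z_k(x) := ∑_{q (k+1)-free, q ≥ 1/x} φ(x,q)·f_k(q)², one has liminf_{x→0⁺} log(Z_k(x))/log(x) ≥ 2 − 1/k. -/

import Mathlib

open Finset Filter Asymptotics ArithmeticFunction Classical

/-- `q` is `k`-free: no `k`-th power of a prime divides `q`. -/
def KFree (k q : ℕ) : Prop := ∀ p : ℕ, p.Prime → ¬ p ^ k ∣ q

/-- The radical (squarefree kernel) of `q`. -/
def rad (q : ℕ) : ℕ := ∏ p ∈ q.primeFactors, p

/-- `f_k(q) = ∏_{p ∣ rad q} 1/(p^k - 1)`. -/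
noncomputable def fk (k q : ℕ) : ℝ := ∏ p ∈ q.primeFactors, 1 / ((p : ℝ) ^ k - 1)

/-- Two-parameter totient `φ(x,q) = #{1 ≤ m ≤ qx : gcd(m,q) = 1}`. -/
noncomputable def phi2 (x : ℝ) (q : ℕ) : ℕ :=
  ((Finset.Icc 1 ⌊(q : ℝ) * x⌋₊).filter fun m => Nat.gcd m q = 1).card


/-- `Z_k(x) = ∑_{q (k+1)-free, q ≥ 1/x} φ(x,q) f_k(q)²`. -/
noncomputable def Z (k : ℕ) (x : ℝ) : ℝ :=
  ∑' q : ℕ, if KFree (k + 1) q ∧ 1 / x ≤ (q : ℝ) then (phi2 x q : ℝ) * (fk k q) ^ 2 else 0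

/-! ### Auxiliary lemmas -/

lemma rad_pos (q : ℕ) : 0 < rad q :=
  Finset.prod_pos fun _ hp => (Nat.prime_of_mem_primeFactors hp).pos

lemma primeFactors_rad (q : ℕ) : (rad q).primeFactors = q.primeFactors :=
  Nat.primeFactors_prod fun _ hp => Nat.prime_of_mem_primeFactors hp

lemma rad_rad (q : ℕ) : rad (rad q) = rad q := by
  conv_lhs => rw [rad, primeFactors_rad]
  rw [rad]

lemma fk_rad (k q : ℕ) : fk k (rad q) = fk k q := by
  unfold fk; rw [primeFactors_rad]

lemma kfree_ne_zero {k q : ℕ} (h : KFree (k + 1) q) : q ≠ 0 := by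
  rintro rfl
  exact h 2 Nat.prime_two (dvd_zero _)

lemma factorization_le_of_kfree {k q : ℕ} (h : KFree (k + 1) q) {p : ℕ} (hp : p.Prime) :
    q.factorization p ≤ k := by
  by_contra hgt
  exact h p hp ((Nat.Prime.pow_dvd_iff_le_factorization hp (kfree_ne_zero h)).2 (by omega))

lemma le_rad_pow {k q : ℕ} (h : KFree (k + 1) q) : q ≤ rad q ^ k := by
  have hq := kfree_ne_zero h
  have hdvd : q ∣ rad q ^ k := by
    conv_lhs => rw [← Nat.factorization_prod_pow_eq_self hq]
    rw [Finsupp.prod, Nat.support_factorization, rad, ← Finset.prod_pow]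
    exact Finset.prod_dvd_prod_of_dvd _ _ fun p hp =>
      pow_dvd_pow p (factorization_le_of_kfree h (Nat.prime_of_mem_primeFactors hp))
  exact Nat.le_of_dvd (pow_pos (rad_pos q) k) hdvd

lemma fk_nonneg (k q : ℕ) : 0 ≤ fk k q := by
  refine Finset.prod_nonneg fun p hp => ?_
  have h2 : (1:ℝ) ≤ (p:ℝ) := by
    exact_mod_cast (Nat.prime_of_mem_primeFactors hp).one_lt.le
  have : (1:ℝ) ≤ (p:ℝ) ^ k := one_le_pow₀ h2
  have : (0:ℝ) ≤ (p:ℝ) ^ k - 1 := by linarith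
  positivity

lemma prime_kfree {k p : ℕ} (hk : 2 ≤ k) (hp : p.Prime) : KFree (k + 1) p := by
  intro ℓ hℓ hdvd
  have hℓp : ℓ ∣ p := dvd_trans (dvd_pow_self ℓ (by omega)) hdvd
  have : ℓ = p := (Nat.prime_dvd_prime_iff_eq hℓ hp).1 hℓp
  subst this
  have hle : ℓ ^ (k + 1) ≤ ℓ := Nat.le_of_dvd hp.pos hdvd
  have : ℓ < ℓ ^ (k + 1) := by
    calc ℓ = ℓ ^ 1 := (pow_one ℓ).symm
    _ < ℓ ^ (k + 1) := Nat.pow_lt_pow_right hp.one_lt (by omega)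
  omega

/-- counting `(k+1)`-free numbers with given radical -/
lemma card_fiber_le {k : ℕ} (hk : 1 ≤ k) (r : ℕ) (F : Finset ℕ)
    (hF : ∀ q ∈ F, KFree (k + 1) q ∧ rad q = r) :
    F.card ≤ k ^ r.primeFactors.card := by
  classical
  have key : F.card ≤ Fintype.card (↥r.primeFactors → Fin k) := by
    rw [← Finset.card_univ]
    refine Finset.card_le_card_of_injOn
      (fun q (p : ↥r.primeFactors) => (⟨(q.factorization p - 1) % k, Nat.mod_lt _ hk⟩ : Fin k))
      (fun _ _ => Finset.mem_univ _) ?_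
    intro q hq q' hq' hfe
    simp only [Finset.mem_coe] at hq hq'
    obtain ⟨hqf, hqr⟩ := hF q hq
    obtain ⟨hqf', hqr'⟩ := hF q' hq'
    have hq0 := kfree_ne_zero hqf
    have hq0' := kfree_ne_zero hqf'
    have hpfq : q.primeFactors = r.primeFactors := by rw [← hqr, primeFactors_rad]
    have hpfq' : q'.primeFactors = r.primeFactors := by rw [← hqr', primeFactors_rad]
    have hfac : q.factorization = q'.factorization := by
      ext p
      by_cases hp : p ∈ r.primeFactors
      · have hp1 : 1 ≤ q.factorization p := by
          have : p ∈ (Nat.factorization q).support := by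
            rw [Nat.support_factorization, hpfq]; exact hp
          have := Finsupp.mem_support_iff.1 this
          omega
        have hp1' : 1 ≤ q'.factorization p := by
          have : p ∈ (Nat.factorization q').support := by
            rw [Nat.support_factorization, hpfq']; exact hp
          have := Finsupp.mem_support_iff.1 this
          omega
        have hpk : q.factorization p ≤ k :=
          factorization_le_of_kfree hqf (Nat.prime_of_mem_primeFactors hp)
        have hpk' : q'.factorization p ≤ k :=
          factorization_le_of_kfree hqf' (Nat.prime_of_mem_primeFactors hp)
        have := congrFun hfe ⟨p, hp⟩
        simp only [Fin.mk.injEq] at this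
        rw [Nat.mod_eq_of_lt (by omega), Nat.mod_eq_of_lt (by omega)] at this
        omega
      · have e1 : q.factorization p = 0 := by
          rw [← Finsupp.notMem_support_iff, Nat.support_factorization, hpfq]; exact hp
        have e2 : q'.factorization p = 0 := by
          rw [← Finsupp.notMem_support_iff, Nat.support_factorization, hpfq']; exact hp
        rw [e1, e2]
    exact Nat.factorization_inj hq0 hq0' hfac
  calc F.card ≤ _ := key
  _ = k ^ r.primeFactors.card := by
      rw [Fintype.card_fun, Fintype.card_fin, Fintype.card_coe]

lemma fk_sq_le {k : ℕ} (hk : 2 ≤ k) (q : ℕ) :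
    fk k q ^ 2 ≤ (2:ℝ) ^ q.primeFactors.card / (rad q : ℝ) ^ (2 * k) := by
  have hstep : fk k q ^ 2 = ∏ p ∈ q.primeFactors, (1 / ((p : ℝ) ^ k - 1)) ^ 2 := by
    rw [fk, ← Finset.prod_pow]
  have hle : ∀ p ∈ q.primeFactors, (1 / ((p : ℝ) ^ k - 1)) ^ 2 ≤ 2 / (p : ℝ) ^ (2 * k) := by
    intro p hp
    have hp2 : (2:ℝ) ≤ (p:ℝ) := by exact_mod_cast (Nat.prime_of_mem_primeFactors hp).two_le
    have ht : (4:ℝ) ≤ (p:ℝ) ^ k := by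
      calc (4:ℝ) = 2 ^ 2 := by norm_num
      _ ≤ (p:ℝ) ^ 2 := by nlinarith
      _ ≤ (p:ℝ) ^ k := pow_le_pow_right₀ (by linarith) hk
    rw [mul_comm 2 k, pow_mul, div_pow, one_pow]
    rw [div_le_div_iff₀ (by nlinarith) (by nlinarith)]
    nlinarith
  calc fk k q ^ 2 = _ := hstep
  _ ≤ ∏ p ∈ q.primeFactors, 2 / (p : ℝ) ^ (2 * k) :=
      Finset.prod_le_prod (fun p _ => sq_nonneg _) hle
  _ = (2:ℝ) ^ q.primeFactors.card / (rad q : ℝ) ^ (2 * k) := by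
      rw [Finset.prod_div_distrib, Finset.prod_const, Finset.prod_pow, rad, Nat.cast_prod]

/-- `c^{ω(r)} ≤ A r^δ` -/
lemma pow_omega_le (c : ℕ) (hc : 1 ≤ c) {δ : ℝ} (hδ : 0 < δ) :
    ∃ A : ℝ, 1 ≤ A ∧ ∀ r : ℕ, 1 ≤ r → (c:ℝ) ^ r.primeFactors.card ≤ A * (r:ℝ) ^ δ := by
  classical
  set B := ⌈(c:ℝ) ^ (1/δ)⌉₊ with hBdef
  have hc1 : (1:ℝ) ≤ (c:ℝ) := by exact_mod_cast hc
  refine ⟨(c:ℝ) ^ B, one_le_pow₀ hc1, ?_⟩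
  intro r hr
  have hr0 : (0:ℝ) < (r:ℝ) := by exact_mod_cast hr
  have hsplit : (c:ℝ) ^ r.primeFactors.card
      = (∏ _p ∈ r.primeFactors.filter (· ≤ B), (c:ℝ))
        * (∏ _p ∈ r.primeFactors.filter (fun p => ¬ p ≤ B), (c:ℝ)) := by
    rw [← Finset.prod_const, ← Finset.prod_filter_mul_prod_filter_not r.primeFactors (· ≤ B)]
  rw [hsplit]
  have h1 : (∏ _p ∈ r.primeFactors.filter (· ≤ B), (c:ℝ)) ≤ (c:ℝ) ^ B := by
    rw [Finset.prod_const]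
    refine pow_le_pow_right₀ hc1 ?_
    have hsub : r.primeFactors.filter (· ≤ B) ⊆ Finset.Icc 1 B := by
      intro p hp
      rw [Finset.mem_filter] at hp
      rw [Finset.mem_Icc]
      exact ⟨(Nat.prime_of_mem_primeFactors hp.1).pos, hp.2⟩
    calc (r.primeFactors.filter (· ≤ B)).card ≤ (Finset.Icc 1 B).card :=
          Finset.card_le_card hsub
    _ = B := by rw [Nat.card_Icc]; omega
  have h2 : (∏ _p ∈ r.primeFactors.filter (fun p => ¬ p ≤ B), (c:ℝ)) ≤ (r:ℝ) ^ δ := by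
    have hperlem : ∀ p ∈ r.primeFactors.filter (fun p => ¬ p ≤ B), (c:ℝ) ≤ (p:ℝ) ^ δ := by
      intro p hp
      rw [Finset.mem_filter] at hp
      have hBp : (B:ℝ) ≤ (p:ℝ) := by exact_mod_cast le_of_lt (by omega : B < p)
      have hcp : (c:ℝ) ^ (1/δ) ≤ (p:ℝ) := le_trans (Nat.le_ceil _) hBp
      have hcc : ((c:ℝ) ^ (1/δ)) ^ δ = (c:ℝ) := by
        rw [← Real.rpow_mul (by positivity), one_div_mul_cancel (ne_of_gt hδ), Real.rpow_one]
      calc (c:ℝ) = ((c:ℝ) ^ (1/δ)) ^ δ := hcc.symm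
      _ ≤ (p:ℝ) ^ δ := Real.rpow_le_rpow (by positivity) hcp (le_of_lt hδ)
    calc (∏ _p ∈ r.primeFactors.filter (fun p => ¬ p ≤ B), (c:ℝ))
        ≤ ∏ p ∈ r.primeFactors.filter (fun p => ¬ p ≤ B), (p:ℝ) ^ δ :=
          Finset.prod_le_prod (fun _ _ => by positivity) hperlem
    _ = (∏ p ∈ r.primeFactors.filter (fun p => ¬ p ≤ B), (p:ℝ)) ^ δ :=
          Real.finset_prod_rpow _ _ (fun _ _ => by positivity) δ
    _ ≤ (r:ℝ) ^ δ := by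
          refine Real.rpow_le_rpow (Finset.prod_nonneg fun _ _ => by positivity) ?_ (le_of_lt hδ)
          have hdvd : (∏ p ∈ r.primeFactors.filter (fun p => ¬ p ≤ B), p) ∣ r := by
            refine dvd_trans ?_ (Nat.prod_primeFactors_dvd r)
            exact Finset.prod_dvd_prod_of_subset _ _ _ (Finset.filter_subset _ _)
          have := Nat.le_of_dvd (by omega) hdvd
          calc (∏ p ∈ r.primeFactors.filter (fun p => ¬ p ≤ B), (p:ℝ))
              = ((∏ p ∈ r.primeFactors.filter (fun p => ¬ p ≤ B), p : ℕ) : ℝ) := by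
                rw [Nat.cast_prod]
          _ ≤ (r:ℝ) := by exact_mod_cast this
  have hnn1 : (0:ℝ) ≤ ∏ _p ∈ r.primeFactors.filter (· ≤ B), (c:ℝ) :=
    Finset.prod_nonneg fun _ _ => by positivity
  have hnn2 : (0:ℝ) ≤ ∏ _p ∈ r.primeFactors.filter (fun p => ¬ p ≤ B), (c:ℝ) :=
    Finset.prod_nonneg fun _ _ => by positivity
  exact mul_le_mul h1 h2 hnn2 (by positivity)


/-- Core: the Rankin-type majorant sum is bounded. -/
lemma g_tsum (k : ℕ) (hk : 2 ≤ k) {ε : ℝ} (hε : 0 < ε) (hε2 : ε ≤ 1/2) :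
    ∃ C : ℝ, 1 ≤ C ∧
      Summable (fun q : ℕ => if KFree (k + 1) q then (q:ℝ) ^ (2 - 1/(k:ℝ) - ε) * fk k q ^ 2 else 0) ∧
      (∑' q : ℕ, if KFree (k + 1) q then (q:ℝ) ^ (2 - 1/(k:ℝ) - ε) * fk k q ^ 2 else 0) ≤ C := by
  classical
  have hk2 : (2:ℝ) ≤ (k:ℝ) := by exact_mod_cast hk
  have hk0 : (0:ℝ) < (k:ℝ) := by linarith
  set β : ℝ := 2 - 1/(k:ℝ) - ε with hβdef
  have hβ1 : 1 ≤ β := by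
    have h12 : 1/(k:ℝ) ≤ 1/2 := by
      apply one_div_le_one_div_of_le <;> linarith
    simp only [hβdef]; linarith
  have hβ0 : 0 ≤ β := by linarith
  set δ : ℝ := (k:ℝ) * ε / 2 with hδdef
  have hδ0 : 0 < δ := by positivity
  obtain ⟨A, hA1, hA⟩ := pow_omega_le (2*k) (by omega) hδ0
  set θ : ℝ := (k:ℝ) * ε / 2 with hθdef
  have hθ0 : 0 < θ := hδ0
  have hsumr : Summable (fun r : ℕ => (r:ℝ) ^ (-(1+θ))) :=
    Real.summable_nat_rpow.2 (by linarith)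
  set C0 : ℝ := A * ∑' r : ℕ, (r:ℝ) ^ (-(1+θ)) with hC0
  set g : ℕ → ℝ := fun q => if KFree (k + 1) q then (q:ℝ) ^ β * fk k q ^ 2 else 0 with hg
  have hgnn : ∀ q, 0 ≤ g q := by
    intro q; simp only [hg]; split
    · exact mul_nonneg (Real.rpow_nonneg (by positivity) _) (sq_nonneg _)
    · exact le_refl 0
  have hbound : ∀ F : Finset ℕ, ∑ q ∈ F, g q ≤ C0 := by
    intro F
    have hfilter : ∑ q ∈ F.filter (fun q => KFree (k+1) q), g q = ∑ q ∈ F, g q := by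
      refine Finset.sum_filter_of_ne ?_
      intro x _ hgx
      by_contra h
      simp only [hg, if_neg h] at hgx
      exact hgx rfl
    rw [← hfilter]
    set F' := F.filter (fun q => KFree (k+1) q) with hF'
    have hmaps : ∀ q ∈ F', rad q ∈ F'.image rad := fun q hq => Finset.mem_image_of_mem rad hq
    rw [← Finset.sum_fiberwise_of_maps_to hmaps g]
    have hinner : ∀ r ∈ F'.image rad,
        (∑ q ∈ F'.filter (fun q => rad q = r), g q) ≤ A * (r:ℝ) ^ (-(1+θ)) := by
      intro r hr
      obtain ⟨q0, hq0F, hq0r⟩ := Finset.mem_image.1 hr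
      have hq0kf : KFree (k+1) q0 := (Finset.mem_filter.1 hq0F).2
      have hr1 : 1 ≤ r := by rw [← hq0r]; exact rad_pos q0
      have hr0 : (0:ℝ) < (r:ℝ) := by exact_mod_cast hr1
      have hradr : rad r = r := by rw [← hq0r, rad_rad]
      set G := F'.filter (fun q => rad q = r) with hGdef
      have hGmem : ∀ q ∈ G, KFree (k+1) q ∧ rad q = r := by
        intro q hq
        simp only [hGdef, hF', Finset.mem_filter] at hq
        exact ⟨hq.1.2, hq.2⟩
      set M : ℝ := (r:ℝ) ^ ((k:ℝ) * β) * fk k r ^ 2 with hM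
      have hMnn : 0 ≤ M := mul_nonneg (Real.rpow_nonneg hr0.le _) (sq_nonneg _)
      have hper : ∀ q ∈ G, g q ≤ M := by
        intro q hq
        obtain ⟨hqkf, hqr⟩ := hGmem q hq
        have hfkq : fk k q = fk k r := by rw [← hqr, fk_rad]
        have hqle : (q:ℝ) ≤ (r:ℝ) ^ (k:ℕ) := by
          have h := le_rad_pow hqkf
          rw [hqr] at h
          exact_mod_cast h
        have h1 : (q:ℝ) ^ β ≤ (r:ℝ) ^ ((k:ℝ) * β) := by
          calc (q:ℝ) ^ β ≤ ((r:ℝ) ^ (k:ℕ)) ^ β :=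
                Real.rpow_le_rpow (by positivity) hqle hβ0
          _ = (r:ℝ) ^ ((k:ℝ) * β) := by
                rw [← Real.rpow_natCast (r:ℝ) k, ← Real.rpow_mul hr0.le]
        simp only [hg, if_pos hqkf, hM, hfkq]
        exact mul_le_mul_of_nonneg_right h1 (sq_nonneg _)
      have hcard : G.card ≤ k ^ r.primeFactors.card := card_fiber_le (by omega) r G hGmem
      have hsumG : ∑ q ∈ G, g q ≤ ((k:ℝ)) ^ r.primeFactors.card * M := by
        calc ∑ q ∈ G, g q ≤ G.card • M := Finset.sum_le_card_nsmul G g M hper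
        _ = (G.card : ℝ) * M := nsmul_eq_mul _ _
        _ ≤ ((k:ℝ)) ^ r.primeFactors.card * M := by
            refine mul_le_mul_of_nonneg_right ?_ hMnn
            exact_mod_cast hcard
      have hfk2 : fk k r ^ 2 ≤ (2:ℝ) ^ r.primeFactors.card / (r:ℝ) ^ (2*k) := by
        have h := fk_sq_le hk r
        rwa [hradr] at h
      have hexp : δ + ((k:ℝ) * β - 2*(k:ℝ)) = -(1+θ) := by
        have hkne : (k:ℝ) ≠ 0 := by linarith
        simp only [hβdef, hδdef, hθdef]
        field_simp
        ring
      have key1 : (r:ℝ) ^ ((k:ℝ)*β) * ((2:ℝ) ^ r.primeFactors.card / (r:ℝ) ^ (2*k))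
          = (2:ℝ) ^ r.primeFactors.card * (r:ℝ) ^ ((k:ℝ)*β - 2*(k:ℝ)) := by
        rw [Real.rpow_sub hr0, ← Real.rpow_natCast (r:ℝ) (2*k)]
        push_cast
        ring
      have hfinal : ((k:ℝ)) ^ r.primeFactors.card * M ≤ A * (r:ℝ) ^ (-(1+θ)) := by
        calc ((k:ℝ)) ^ r.primeFactors.card * M
            ≤ (k:ℝ) ^ r.primeFactors.card
              * ((r:ℝ) ^ ((k:ℝ)*β) * ((2:ℝ) ^ r.primeFactors.card / (r:ℝ) ^ (2*k))) := by
              refine mul_le_mul_of_nonneg_left ?_ (by positivity)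
              exact mul_le_mul_of_nonneg_left hfk2 (Real.rpow_nonneg hr0.le _)
        _ = ((2*k : ℕ):ℝ) ^ r.primeFactors.card * (r:ℝ) ^ ((k:ℝ)*β - 2*(k:ℝ)) := by
              rw [key1]
              push_cast
              ring
        _ ≤ (A * (r:ℝ) ^ δ) * (r:ℝ) ^ ((k:ℝ)*β - 2*(k:ℝ)) := by
              refine mul_le_mul_of_nonneg_right (hA r hr1) (Real.rpow_nonneg hr0.le _)
        _ = A * (r:ℝ) ^ (δ + ((k:ℝ)*β - 2*(k:ℝ))) := by
              rw [Real.rpow_add hr0]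
              ring
        _ = A * (r:ℝ) ^ (-(1+θ)) := by rw [hexp]
      exact le_trans hsumG hfinal
    calc ∑ r ∈ F'.image rad, ∑ q ∈ F'.filter (fun q => rad q = r), g q
        ≤ ∑ r ∈ F'.image rad, A * (r:ℝ) ^ (-(1+θ)) := Finset.sum_le_sum hinner
    _ ≤ C0 := by
        rw [hC0, ← tsum_mul_left]
        refine Summable.sum_le_tsum _ (fun i _ => ?_) (hsumr.mul_left A)
        exact mul_nonneg (by linarith) (Real.rpow_nonneg (Nat.cast_nonneg i) _)
  have hsumg : Summable g := summable_of_sum_le hgnn hbound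
  exact ⟨max 1 C0, le_max_left _ _, hsumg,
    le_trans (Summable.tsum_le_of_sum_le hsumg hbound) (le_max_right _ _)⟩


lemma Z_le (k : ℕ) (hk : 2 ≤ k) {ε : ℝ} (hε : 0 < ε) (hε2 : ε ≤ 1/2) :
    ∃ C : ℝ, 1 ≤ C ∧ ∀ x : ℝ, x ∈ Set.Ioo (0:ℝ) 1 →
      Summable (fun q : ℕ =>
        if KFree (k + 1) q ∧ 1 / x ≤ (q : ℝ) then (phi2 x q : ℝ) * (fk k q) ^ 2 else 0) ∧
      Z k x ≤ C * x ^ (2 - 1/(k:ℝ) - ε) := by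
  classical
  obtain ⟨C, hC1, hsumg, htsum⟩ := g_tsum k hk hε hε2
  have hk2 : (2:ℝ) ≤ (k:ℝ) := by exact_mod_cast hk
  set β : ℝ := 2 - 1/(k:ℝ) - ε with hβdef
  have hβ1 : 1 ≤ β := by
    have h12 : 1/(k:ℝ) ≤ 1/2 := by
      apply one_div_le_one_div_of_le <;> linarith
    simp only [hβdef]; linarith
  refine ⟨C, hC1, ?_⟩
  intro x hx
  obtain ⟨hx0, hx1⟩ := hx
  set g : ℕ → ℝ := fun q => if KFree (k + 1) q then (q:ℝ) ^ β * fk k q ^ 2 else 0 with hg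
  set T : ℕ → ℝ := fun q =>
    if KFree (k + 1) q ∧ 1 / x ≤ (q : ℝ) then (phi2 x q : ℝ) * (fk k q) ^ 2 else 0 with hT
  have hTnn : ∀ q, 0 ≤ T q := by
    intro q; simp only [hT]; split
    · positivity
    · exact le_refl 0
  have hmaj : ∀ q, T q ≤ x ^ β * g q := by
    intro q
    simp only [hT, hg]
    split
    case isTrue h =>
      obtain ⟨hkf, hxq⟩ := h
      rw [if_pos hkf]
      have hq1 : (1:ℝ) ≤ (q:ℝ) * x := by
        rw [div_le_iff₀ hx0] at hxq
        linarith
      have hphi : (phi2 x q : ℝ) ≤ (q:ℝ) * x := by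
        have hcard : phi2 x q ≤ ⌊(q : ℝ) * x⌋₊ := by
          calc phi2 x q ≤ (Finset.Icc 1 ⌊(q : ℝ) * x⌋₊).card := Finset.card_filter_le _ _
          _ = ⌊(q : ℝ) * x⌋₊ := by rw [Nat.card_Icc]; omega
        calc (phi2 x q : ℝ) ≤ (⌊(q : ℝ) * x⌋₊ : ℝ) := by exact_mod_cast hcard
        _ ≤ (q:ℝ) * x := Nat.floor_le (by positivity)
      have hup : (q:ℝ) * x ≤ ((q:ℝ) * x) ^ β := by
        calc (q:ℝ) * x = ((q:ℝ) * x) ^ (1:ℝ) := (Real.rpow_one _).symm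
        _ ≤ ((q:ℝ) * x) ^ β := Real.rpow_le_rpow_of_exponent_le hq1 hβ1
      have hmr : ((q:ℝ) * x) ^ β = (q:ℝ)^β * x^β := Real.mul_rpow (by positivity) hx0.le
      calc (phi2 x q : ℝ) * fk k q ^ 2 ≤ ((q:ℝ) * x) * fk k q ^ 2 :=
            mul_le_mul_of_nonneg_right hphi (sq_nonneg _)
      _ ≤ ((q:ℝ) * x) ^ β * fk k q ^ 2 := mul_le_mul_of_nonneg_right hup (sq_nonneg _)
      _ = x ^ β * ((q:ℝ)^β * fk k q ^ 2) := by rw [hmr]; ring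
    case isFalse h =>
      refine mul_nonneg (Real.rpow_nonneg hx0.le _) ?_
      split
      · exact mul_nonneg (Real.rpow_nonneg (Nat.cast_nonneg _) _) (sq_nonneg _)
      · exact le_refl 0
  have hsumT : Summable T := Summable.of_nonneg_of_le hTnn hmaj (hsumg.mul_left (x ^ β))
  refine ⟨hsumT, ?_⟩
  have hZT : Z k x = ∑' q, T q := by
    rw [Z]
  rw [hZT]
  calc ∑' q, T q ≤ ∑' q, x ^ β * g q := Summable.tsum_le_tsum hmaj hsumT (hsumg.mul_left _)
  _ = x ^ β * ∑' q, g q := tsum_mul_left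
  _ ≤ x ^ β * C := mul_le_mul_of_nonneg_left htsum (Real.rpow_nonneg hx0.le _)
  _ = C * x ^ β := mul_comm _ _

lemma Z_lb (k : ℕ) (hk : 2 ≤ k) {x : ℝ} (hx : x ∈ Set.Ioo (0:ℝ) 1)
    (hsum : Summable (fun q : ℕ =>
      if KFree (k + 1) q ∧ 1 / x ≤ (q : ℝ) then (phi2 x q : ℝ) * (fk k q) ^ 2 else 0)) :
    (x/4) ^ (2*k) ≤ Z k x := by
  obtain ⟨hx0, hx1⟩ := hx
  have h1x : (1:ℝ) ≤ 1/x := by rw [le_div_iff₀ hx0]; linarith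
  have hn0 : ⌈1/x⌉₊ ≠ 0 := by
    have : 0 < ⌈1/x⌉₊ := Nat.ceil_pos.2 (by positivity)
    omega
  obtain ⟨p, hp, hnp, hp2n⟩ := Nat.exists_prime_lt_and_le_two_mul _ hn0
  have hkfp : KFree (k + 1) p := prime_kfree hk hp
  have hpx : 1/x ≤ (p:ℝ) := by
    calc 1/x ≤ (⌈1/x⌉₊ : ℝ) := Nat.le_ceil _
    _ ≤ (p:ℝ) := by exact_mod_cast hnp.le
  have hcond : KFree (k + 1) p ∧ 1 / x ≤ (p : ℝ) := ⟨hkfp, hpx⟩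
  have hp2 : (2:ℝ) ≤ (p:ℝ) := by exact_mod_cast hp.two_le
  have hp4x : (p:ℝ) ≤ 4/x := by
    have hceil : (⌈1/x⌉₊:ℝ) < 1/x + 1 := Nat.ceil_lt_add_one (by positivity)
    have h2n : (p:ℝ) ≤ 2 * (⌈1/x⌉₊:ℝ) := by exact_mod_cast hp2n
    calc (p:ℝ) ≤ 2 * (⌈1/x⌉₊:ℝ) := h2n
    _ ≤ 2 * (1/x + 1) := by linarith
    _ ≤ 2 * (1/x + 1/x) := by linarith
    _ = 4/x := by ring
  have hfloor : 1 ≤ ⌊(p:ℝ) * x⌋₊ := by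
    refine Nat.le_floor ?_
    rw [div_le_iff₀ hx0] at hpx
    push_cast
    linarith
  have hmem : (1:ℕ) ∈ (Finset.Icc 1 ⌊(p : ℝ) * x⌋₊).filter fun m => Nat.gcd m p = 1 := by
    rw [Finset.mem_filter, Finset.mem_Icc]
    exact ⟨⟨le_refl 1, hfloor⟩, Nat.gcd_one_left p⟩
  have hphi : (1:ℝ) ≤ (phi2 x p : ℝ) := by
    have hpos : 0 < phi2 x p := Finset.card_pos.2 ⟨1, hmem⟩
    exact_mod_cast hpos
  have hpk4 : (4:ℝ) ≤ (p:ℝ)^k := by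
    calc (4:ℝ) = 2^2 := by norm_num
    _ ≤ (p:ℝ)^2 := by nlinarith
    _ ≤ (p:ℝ)^k := pow_le_pow_right₀ (by linarith) hk
  have hfkp : fk k p = 1/((p:ℝ)^k - 1) := by
    rw [fk, Nat.Prime.primeFactors hp, Finset.prod_singleton]
  have hpx4 : (p:ℝ) * x ≤ 4 := by
    rw [le_div_iff₀ hx0] at hp4x
    linarith
  have hxple : (x/4) * (p:ℝ) ≤ 1 := by nlinarith
  have hfkge : (x/4)^k ≤ fk k p := by
    rw [hfkp]
    have h1 : ((x/4) * (p:ℝ))^k ≤ 1 := pow_le_one₀ (by positivity) hxple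
    have h2 : (x/4)^k * (p:ℝ)^k ≤ 1 := by rwa [mul_pow] at h1
    have h3 : (x/4)^k ≤ 1/((p:ℝ)^k) := by
      rw [le_div_iff₀ (by positivity : (0:ℝ) < (p:ℝ)^k)]
      linarith
    calc (x/4)^k ≤ 1/((p:ℝ)^k) := h3
    _ ≤ 1/((p:ℝ)^k - 1) := by
        apply one_div_le_one_div_of_le (by linarith) (by linarith)
  have hterm : (x/4)^(2*k) ≤ (phi2 x p : ℝ) * (fk k p) ^ 2 := by
    have hsq : ((x/4)^k)^2 ≤ (fk k p)^2 := by
      apply pow_le_pow_left₀ (by positivity) hfkge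
    calc (x/4)^(2*k) = ((x/4)^k)^2 := by rw [← pow_mul, mul_comm]
    _ ≤ (fk k p)^2 := hsq
    _ = 1 * (fk k p)^2 := (one_mul _).symm
    _ ≤ (phi2 x p : ℝ) * (fk k p)^2 := mul_le_mul_of_nonneg_right hphi (sq_nonneg _)
  have hle := Summable.le_tsum hsum p (fun j _ => by
    split
    · positivity
    · exact le_refl 0)
  rw [if_pos hcond] at hle
  rw [Z]
  linarith

theorem stmt17 (k : ℕ) (hk : 2 ≤ k) :
    2 - 1 / (k : ℝ) ≤
      Filter.liminf (fun x : ℝ => Real.log (Z k x) / Real.log x) (nhdsWithin 0 (Set.Ioi 0)) := by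
  have hk2 : (2:ℝ) ≤ (k:ℝ) := by exact_mod_cast hk
  set u : ℝ → ℝ := fun x => Real.log (Z k x) / Real.log x with hu
  obtain ⟨C₁, hC₁1, hC₁⟩ := Z_le k hk (by norm_num : (0:ℝ) < 1/2) (le_refl _)
  have hev_ub : ∀ᶠ x in nhdsWithin (0:ℝ) (Set.Ioi 0), u x ≤ 4*(k:ℝ) := by
    filter_upwards [Ioo_mem_nhdsGT_of_mem
      (Set.mem_Ico.2 ⟨le_refl (0:ℝ), (by norm_num : (0:ℝ) < 1/4)⟩)] with x hx
    obtain ⟨hx0, hx14⟩ := hx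
    have hx1 : x < 1 := by linarith
    obtain ⟨hsum, -⟩ := hC₁ x ⟨hx0, hx1⟩
    have hZlb : (x/4)^(2*k) ≤ Z k x := Z_lb k hk ⟨hx0, hx1⟩ hsum
    have hZpos : 0 < Z k x := lt_of_lt_of_le (by positivity) hZlb
    have hlogx : Real.log x < 0 := Real.log_neg hx0 hx1
    have hlogZ : (2*(k:ℝ)) * (Real.log x - Real.log 4) ≤ Real.log (Z k x) := by
      have h := Real.log_le_log (by positivity) hZlb
      rw [Real.log_pow, Real.log_div (ne_of_gt hx0) (by norm_num)] at h
      push_cast at h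
      linarith
    have hL4 : 0 < Real.log 4 := Real.log_pos (by norm_num)
    have hx4 : Real.log x ≤ -Real.log 4 := by
      have h := Real.log_le_log hx0 (le_of_lt hx14)
      rw [show (1:ℝ)/4 = 4⁻¹ by norm_num, Real.log_inv] at h
      exact h
    simp only [hu]
    rw [div_le_iff_of_neg hlogx]
    nlinarith [hlogZ, hx4, hlogx, hL4, hk2]
  have hcob : IsCoboundedUnder (· ≥ ·) (nhdsWithin (0:ℝ) (Set.Ioi 0)) u :=
    Filter.isCoboundedUnder_ge_of_eventually_le _ hev_ub
  refine le_of_forall_pos_le_add fun ε hε => ?_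
  set ε' : ℝ := min ε (1/2) with hε'
  have hε'0 : 0 < ε' := lt_min hε (by norm_num)
  have hε'2 : ε' ≤ 1/2 := min_le_right _ _
  have hε'ε : ε' ≤ ε := min_le_left _ _
  obtain ⟨C, hC1, hC⟩ := Z_le k hk (by positivity : (0:ℝ) < ε'/2) (by linarith)
  have hC0 : (0:ℝ) < C := by linarith
  have hlogC : 0 ≤ Real.log C := Real.log_nonneg hC1
  set x₀ : ℝ := min (1/2) (Real.exp (-(2*Real.log C/ε'))) with hx₀
  have hx₀pos : 0 < x₀ := lt_min (by norm_num) (Real.exp_pos _)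
  have hev : ∀ᶠ x in nhdsWithin (0:ℝ) (Set.Ioi 0), 2 - 1/(k:ℝ) - ε' ≤ u x := by
    filter_upwards [Ioo_mem_nhdsGT_of_mem
      (Set.mem_Ico.2 ⟨le_refl (0:ℝ), hx₀pos⟩)] with x hx
    obtain ⟨hx0, hxx₀⟩ := hx
    have hx1 : x < 1 := lt_of_lt_of_le hxx₀ (le_trans (min_le_left _ _) (by norm_num))
    obtain ⟨hsum, hZle⟩ := hC x ⟨hx0, hx1⟩
    have hZlb : (x/4)^(2*k) ≤ Z k x := Z_lb k hk ⟨hx0, hx1⟩ hsum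
    have hZpos : 0 < Z k x := lt_of_lt_of_le (by positivity) hZlb
    have hlogx : Real.log x < 0 := Real.log_neg hx0 hx1
    have hlogZ : Real.log (Z k x) ≤ Real.log C + (2 - 1/(k:ℝ) - ε'/2) * Real.log x := by
      have h1 := Real.log_le_log hZpos hZle
      rw [Real.log_mul (ne_of_gt hC0) (ne_of_gt (Real.rpow_pos_of_pos hx0 _)),
        Real.log_rpow hx0] at h1
      exact h1
    have hlogxle : Real.log x ≤ -(2*Real.log C/ε') := by
      have h := Real.log_le_log hx0 (le_trans hxx₀.le (min_le_right _ _))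
      rwa [Real.log_exp] at h
    simp only [hu]
    rw [le_div_iff_of_neg hlogx]
    have key : Real.log C ≤ (ε'/2) * (-Real.log x) := by
      have h2 : ε' * Real.log x ≤ -(2*Real.log C) := by
        have h3 := mul_le_mul_of_nonneg_left hlogxle (le_of_lt hε'0)
        calc ε' * Real.log x ≤ ε' * (-(2*Real.log C/ε')) := h3
        _ = -(2*Real.log C) := by field_simp
      nlinarith
    nlinarith [hlogZ, key]
  have hlim : 2 - 1/(k:ℝ) - ε' ≤ Filter.liminf u (nhdsWithin (0:ℝ) (Set.Ioi 0)) :=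
    Filter.le_liminf_of_le hcob hev
  linarith
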